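/- arXiv:2401.10990 — 3 statements merged into one kernel-verified Lean document; each statement's English description precedes it below -/
import Mathlib

section
/- Let h : ℝ^n → ℝ^n be globally Lipschitz with constant γ ≥ 0 (with respect to the Euclidean norm). Then there exist functions h_ij : ℝ^n × ℝ^n → ℝ, for 1 ≤ i, j ≤ n, such that |h_ij(Ψ, Φ)| ≤ γ for all Ψ, Φ ∈ ℝ^n, and for all Ψ, Φ ∈ ℝ^n and each component index i, one has h(Ψ)_i − h(Φ)_i = Σ_{j=1}^{n} h_ij(Ψ, Φ) · (Ψ_j − Φ_j); equivalently, h(Ψ) − h(Φ) = Σ_{i,j=1}^{n} h_ij(Ψ, Φ) · ℋ_ij (Ψ − Φ), where ℋ_ij = e_n(i) e_n(j)ᵀ. -/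
open scoped BigOperators

/-- Intermediate point: first `k` coordinates from `Ψ`, rest from `Φ`. -/
noncomputable def zemZ (n : ℕ) (Ψ Φ : EuclideanSpace ℝ (Fin n)) (k : ℕ) :
    EuclideanSpace ℝ (Fin n) :=
  WithLp.toLp 2 (fun t : Fin n => if (t : ℕ) < k then Ψ t else Φ t)

lemma zemZ_succ_sub (n : ℕ) (Ψ Φ : EuclideanSpace ℝ (Fin n)) (j : Fin n) :
    zemZ n Ψ Φ (j + 1) - zemZ n Ψ Φ j = EuclideanSpace.single j (Ψ j - Φ j) := by
  ext t
  simp only [zemZ, PiLp.sub_apply, EuclideanSpace.single_apply]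
  by_cases ht : t = j
  · subst ht; simp
  · have : (t : ℕ) ≠ (j : ℕ) := fun hc => ht (Fin.ext hc)
    rw [if_neg ht]
    by_cases h2 : (t : ℕ) < (j : ℕ)
    · have h3 : (t : ℕ) < (j : ℕ) + 1 := by omega
      simp [h2, h3]
    · have h3 : ¬ (t : ℕ) < (j : ℕ) + 1 := by omega
      simp [h2, h3]

lemma zem_coord_le (n : ℕ) (x : EuclideanSpace ℝ (Fin n)) (i : Fin n) :
    |x i| ≤ ‖x‖ := by
  rw [EuclideanSpace.norm_eq]
  have h1 : |x i| = Real.sqrt (‖x i‖ ^ 2) := by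
    rw [Real.sqrt_sq (norm_nonneg _)]; simp [Real.norm_eq_abs]
  rw [h1]
  apply Real.sqrt_le_sqrt
  exact Finset.single_le_sum (f := fun t => ‖x t‖ ^ 2)
    (fun t _ => by positivity) (Finset.mem_univ i)

/-- Reformulated Lipschitz property (Zemouche et al.): a globally Lipschitz map
`h : ℝⁿ → ℝⁿ` (Euclidean norm, constant `γ ≥ 0`) admits bounded functions `h_ij`
such that `h(Ψ)ᵢ − h(Φ)ᵢ = ∑ⱼ h_ij(Ψ,Φ) (Ψⱼ − Φⱼ)`. -/
theorem stmt_0 (n : ℕ) (γ : ℝ) (hγ : 0 ≤ γ)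
    (h : EuclideanSpace ℝ (Fin n) → EuclideanSpace ℝ (Fin n))
    (hLip : ∀ u v : EuclideanSpace ℝ (Fin n), ‖h u - h v‖ ≤ γ * ‖u - v‖) :
    ∃ H : Fin n → Fin n → EuclideanSpace ℝ (Fin n) → EuclideanSpace ℝ (Fin n) → ℝ,
      (∀ i j Ψ Φ, |H i j Ψ Φ| ≤ γ) ∧
      (∀ (Ψ Φ : EuclideanSpace ℝ (Fin n)) (i : Fin n),
        h Ψ i - h Φ i = ∑ j : Fin n, H i j Ψ Φ * (Ψ j - Φ j)) := by
  refine ⟨fun i j Ψ Φ =>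
    if Ψ j = Φ j then 0
    else (h (zemZ n Ψ Φ (j + 1)) i - h (zemZ n Ψ Φ j) i) / (Ψ j - Φ j), ?_, ?_⟩
  · intro i j Ψ Φ
    dsimp only
    by_cases hjj : Ψ j = Φ j
    · simp [hjj, hγ]
    · rw [if_neg hjj]
      have hne : Ψ j - Φ j ≠ 0 := sub_ne_zero.mpr hjj
      have key : |h (zemZ n Ψ Φ (j + 1)) i - h (zemZ n Ψ Φ j) i| ≤ γ * |Ψ j - Φ j| := by
        calc |h (zemZ n Ψ Φ (j + 1)) i - h (zemZ n Ψ Φ j) i|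
            = |(h (zemZ n Ψ Φ (j + 1)) - h (zemZ n Ψ Φ j)) i| := by
              simp [PiLp.sub_apply]
          _ ≤ ‖h (zemZ n Ψ Φ (j + 1)) - h (zemZ n Ψ Φ j)‖ := zem_coord_le n _ i
          _ ≤ γ * ‖zemZ n Ψ Φ (j + 1) - zemZ n Ψ Φ j‖ := hLip _ _
          _ = γ * |Ψ j - Φ j| := by
              rw [zemZ_succ_sub, EuclideanSpace.norm_single, Real.norm_eq_abs]
      rw [abs_div]
      rw [div_le_iff₀ (abs_pos.mpr hne)]
      exact key
  · intro Ψ Φ i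
    have hterm : ∀ j : Fin n,
        (if Ψ j = Φ j then 0
          else (h (zemZ n Ψ Φ (j + 1)) i - h (zemZ n Ψ Φ j) i) / (Ψ j - Φ j))
          * (Ψ j - Φ j)
        = h (zemZ n Ψ Φ ((j : ℕ) + 1)) i - h (zemZ n Ψ Φ j) i := by
      intro j
      by_cases hjj : Ψ j = Φ j
      · have hz : zemZ n Ψ Φ ((j : ℕ) + 1) = zemZ n Ψ Φ j := by
          have := zemZ_succ_sub n Ψ Φ j
          rw [hjj, sub_self] at this
          have h0 : EuclideanSpace.single j (0:ℝ) = 0 := by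
            ext t; simp [EuclideanSpace.single_apply]
          rw [h0] at this
          exact sub_eq_zero.mp this
        simp [hjj, hz]
      · rw [if_neg hjj, div_mul_cancel₀ _ (sub_ne_zero.mpr hjj)]
    calc h Ψ i - h Φ i
        = h (zemZ n Ψ Φ n) i - h (zemZ n Ψ Φ 0) i := by
          have hN : zemZ n Ψ Φ n = Ψ := by ext t; simp [zemZ, t.isLt]
          have h0 : zemZ n Ψ Φ 0 = Φ := by ext t; simp [zemZ]
          rw [hN, h0]
      _ = ∑ k ∈ Finset.range n,
            (h (zemZ n Ψ Φ (k + 1)) i - h (zemZ n Ψ Φ k) i) := by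
          rw [Finset.sum_range_sub (fun k => h (zemZ n Ψ Φ k) i)]
      _ = ∑ j : Fin n, (h (zemZ n Ψ Φ ((j : ℕ) + 1)) i - h (zemZ n Ψ Φ j) i) := by
          exact (Fin.sum_univ_eq_sum_range
            (fun k => h (zemZ n Ψ Φ (k + 1)) i - h (zemZ n Ψ Φ k) i) n).symm
      _ = _ := by
          refine Finset.sum_congr rfl fun j _ => ?_
          exact (hterm j).symm
end

section
/- For any two vectors X, Y ∈ ℝ^n and any symmetric positive definite matrix Z ∈ ℝ^{n×n}, the inequality XᵀY + YᵀX ≤ (X + ZY)ᵀ (2Z)⁻¹ (X + ZY) holds (as an inequality of real numbers). -/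
open Matrix

/-- Variant of Young's inequality (Zemouche et al.): for `X, Y ∈ ℝⁿ` and `Z ≻ 0`,
`XᵀY + YᵀX ≤ (X + ZY)ᵀ (2Z)⁻¹ (X + ZY)`. -/
theorem stmt_2 (n : ℕ) (X Y : Fin n → ℝ) (Z : Matrix (Fin n) (Fin n) ℝ)
    (hZ : Z.PosDef) :
    X ⬝ᵥ Y + Y ⬝ᵥ X ≤
      (X + Z.mulVec Y) ⬝ᵥ ((2 : ℝ) • Z)⁻¹.mulVec (X + Z.mulVec Y) := by
  have hdet : IsUnit Z.det := isUnit_iff_ne_zero.mpr hZ.det_pos.ne'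
  have hW : Z⁻¹.PosDef := hZ.inv
  have hWZ : Z⁻¹ * Z = 1 := nonsing_inv_mul Z hdet
  have hZW : Z * Z⁻¹ = 1 := mul_nonsing_inv Z hdet
  have hZsym : Zᵀ = Z := hZ.isHermitian
  have hWsym : Z⁻¹ᵀ = Z⁻¹ := hW.isHermitian
  have hinv : ((2 : ℝ) • Z)⁻¹ = (2 : ℝ)⁻¹ • Z⁻¹ := by
    letI : Invertible (2 : ℝ) := invertibleOfNonzero two_ne_zero
    rw [Matrix.inv_smul (A := Z) (k := (2 : ℝ)) hdet, invOf_eq_inv]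
  -- key nonnegativity
  have hpsd : 0 ≤ (X - Z.mulVec Y) ⬝ᵥ Z⁻¹.mulVec (X - Z.mulVec Y) := by
    have := hW.posSemidef.re_dotProduct_nonneg (X - Z.mulVec Y)
    simpa using this
  -- cross term identities
  have c1 : X ⬝ᵥ Z⁻¹.mulVec (Z.mulVec Y) = X ⬝ᵥ Y := by
    rw [mulVec_mulVec, hWZ, one_mulVec]
  have c2 : (Z.mulVec Y) ⬝ᵥ Z⁻¹.mulVec X = Y ⬝ᵥ X := by
    rw [show Z *ᵥ Y = Y ᵥ* Z from by rw [← hZsym, mulVec_transpose, hZsym],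
      dotProduct_mulVec, vecMul_vecMul, hZW, vecMul_one]
  rw [hinv]
  have expand1 :
      (X + Z.mulVec Y) ⬝ᵥ ((2:ℝ)⁻¹ • Z⁻¹).mulVec (X + Z.mulVec Y) =
      (2:ℝ)⁻¹ * (X ⬝ᵥ Z⁻¹.mulVec X + X ⬝ᵥ Y + Y ⬝ᵥ X
        + (Z.mulVec Y) ⬝ᵥ Z⁻¹.mulVec (Z.mulVec Y)) := by
    rw [smul_mulVec, dotProduct_smul, mulVec_add, dotProduct_add, add_dotProduct,
      add_dotProduct, c1, c2, smul_eq_mul]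
    ring
  have expand2 :
      (X - Z.mulVec Y) ⬝ᵥ Z⁻¹.mulVec (X - Z.mulVec Y) =
      X ⬝ᵥ Z⁻¹.mulVec X - X ⬝ᵥ Y - Y ⬝ᵥ X
        + (Z.mulVec Y) ⬝ᵥ Z⁻¹.mulVec (Z.mulVec Y) := by
    rw [mulVec_sub, dotProduct_sub, sub_dotProduct, sub_dotProduct, c1, c2]
    ring
  rw [expand1]
  rw [expand2] at hpsd
  linarith
end

section
/- (Theorem 2, LPV-based LMI.) Assume μ > 0, P ≻ 0, R ∈ ℝ^{p×n}, and let Z and S be structured multiplier matrices as in the context (Z of size m·n̄² partitioned into n̄×n̄ blocks with symmetric positive definite diagonal blocks and symmetric positive semidefinite off-diagonal blocks, Z ≻ 0; S analogously of size r·p̄²). Suppose that for every Φ ∈ 𝓕 and every Ψ ∈ 𝓖 (where 𝓕 is the set of stacked matrices with (i,j)-th block φ_ij · I_{2n+q} for some φ_ij ∈ [0, f_b(i,j)], and 𝓖 analogously with ψ_ij ∈ [0, g_b(i,j)]), the symmetric 3×3 block matrix [[Σ, (𝕌 + ZℍΦ)ᵀ, (𝕄 + S𝔾Ψ)ᵀ],[𝕌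 + ZℍΦ, −2Z, 0],[𝕄 + S𝔾Ψ, 0, −2S]] is negative definite. Set L = P⁻¹Rᵀ. Then for every choice of parameter sequences f_ij : ℕ → ℝ with 0 ≤ f_ij(k) ≤ f_b(i,j) and g_ij : ℕ → ℝ with 0 ≤ g_ij(k) ≤ g_b(i,j), every ω : ℕ → ℝ^q, and every e : ℕ → ℝ^n satisfying e(k+1) = (A − LC + Σ_{i,j} f_ij(k) G ℋ_ij H_i − Σ_{i,j} g_ij(k) L F 𝒢_ij G_i) e(k) + (E − LD) ω(k) for all k, one has for all N ∈ ℕ: Σ_{k=0}^{N−1} ‖e(k)‖² ≤ μ Σ_{k=0}^{N−1} ‖ω(k)‖² + λ_max(P) ‖e(0)‖². -/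
open Matrix
open scoped BigOperators

lemma quad_le_sup_eig {nn : ℕ} (P : Matrix (Fin nn) (Fin nn) ℝ) (hP : P.PosDef)
    (x : Fin nn → ℝ) :
    x ⬝ᵥ P *ᵥ x ≤ (⨆ i, hP.isHermitian.eigenvalues i) * (x ⬝ᵥ x) := by
  rcases Nat.eq_zero_or_pos nn with h0 | hpos
  · subst h0
    simp [dotProduct, mulVec]
  · have hne : Nonempty (Fin nn) := ⟨⟨0, hpos⟩⟩
    set hH := hP.isHermitian with hHdef
    set ev := hH.eigenvalues with hev
    set Um : Matrix (Fin nn) (Fin nn) ℝ := (hH.eigenvectorUnitary : Matrix (Fin nn) (Fin nn) ℝ) with hUm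
    have hspec : P = Um * Matrix.diagonal ev * Umᵀ := by
      have := hH.spectral_theorem
      simpa [hUm, Matrix.star_eq_conjTranspose, Function.comp] using this
    have hunit : Um * Umᵀ = 1 := by
      have := (Unitary.mem_iff.mp hH.eigenvectorUnitary.2).2
      simpa [hUm, Matrix.star_eq_conjTranspose] using this
    set y : Fin nn → ℝ := Umᵀ *ᵥ x with hy
    have hxy : x ⬝ᵥ x = y ⬝ᵥ y := by
      rw [hy, Matrix.dotProduct_mulVec, Matrix.vecMul_transpose, Matrix.mulVec_mulVec,
        hunit, Matrix.one_mulVec]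
    have hquad : x ⬝ᵥ P *ᵥ x = y ⬝ᵥ (Matrix.diagonal ev) *ᵥ y := by
      rw [hspec, hy]
      rw [show (Um * Matrix.diagonal ev * Umᵀ) *ᵥ x = Um *ᵥ (Matrix.diagonal ev *ᵥ (Umᵀ *ᵥ x)) by
        simp [Matrix.mulVec_mulVec, Matrix.mul_assoc]]
      rw [Matrix.dotProduct_mulVec, ← Matrix.mulVec_transpose]
    have hbdd : BddAbove (Set.range ev) := Set.Finite.bddAbove (Set.finite_range ev)
    have hle : ∀ i, ev i ≤ ⨆ i, ev i := fun i => le_ciSup hbdd i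
    rw [hquad, hxy]
    have hdiag : y ⬝ᵥ (Matrix.diagonal ev) *ᵥ y = ∑ i, ev i * (y i * y i) := by
      simp [dotProduct, Matrix.mulVec_diagonal]
      congr 1; funext i; ring
    have hyy : y ⬝ᵥ y = ∑ i, y i * y i := rfl
    rw [hdiag, hyy, Finset.mul_sum]
    apply Finset.sum_le_sum
    intro i _
    have : 0 ≤ y i * y i := mul_self_nonneg _
    exact mul_le_mul_of_nonneg_right (hle i) this


lemma dot_symm {α β : Type*} [Fintype α] [Fintype β] (M : Matrix α β ℝ) (u : α → ℝ) (x : β → ℝ) :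
    u ⬝ᵥ (M *ᵥ x) = x ⬝ᵥ (Mᵀ *ᵥ u) := by
  rw [Matrix.dotProduct_mulVec, ← Matrix.mulVec_transpose, dotProduct_comm]

lemma sum_mulVec' {ι α β : Type*} [Fintype β] (s : Finset ι) (M : ι → Matrix α β ℝ)
    (x : β → ℝ) : (∑ i ∈ s, M i) *ᵥ x = ∑ i ∈ s, (M i) *ᵥ x := by
  funext c
  simp [Matrix.mulVec, dotProduct, Finset.sum_apply, Matrix.sum_apply, Finset.sum_mul]
  rw [Finset.sum_comm]

lemma dot_sum' {ι β : Type*} [Fintype β] (s : Finset ι) (v : β → ℝ) (w : ι → β → ℝ) :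
    v ⬝ᵥ (∑ i ∈ s, w i) = ∑ i ∈ s, v ⬝ᵥ w i := by
  simp [dotProduct, Finset.sum_apply, Finset.mul_sum]
  rw [Finset.sum_comm]

/-- Theorem 2 of the paper (LPV-based LMI): if the 3×3 block LMI holds (≺ 0) at
every parameter matrix `Φ ∈ 𝓕`, `Ψ ∈ 𝓖`, then the H∞ performance bound follows
for the observer error dynamics, with `L = P⁻¹Rᵀ`. -/
theorem stmt_13
    (n p q m r n' p' : ℕ)
    (A : Matrix (Fin n) (Fin n) ℝ) (C : Matrix (Fin p) (Fin n) ℝ)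
    (E : Matrix (Fin n) (Fin q) ℝ) (D : Matrix (Fin p) (Fin q) ℝ)
    (G : Matrix (Fin n) (Fin m) ℝ) (F : Matrix (Fin p) (Fin r) ℝ)
    (H : Fin m → Matrix (Fin n') (Fin n) ℝ)
    (Gm : Fin r → Matrix (Fin p') (Fin n) ℝ)
    (fb : Fin m → Fin n' → ℝ) (gb : Fin r → Fin p' → ℝ)
    (hfb : ∀ i j, 0 ≤ fb i j) (hgb : ∀ i j, 0 ≤ gb i j)
    (μ : ℝ) (hμ : 0 < μ)
    (P : Matrix (Fin n) (Fin n) ℝ) (hP : P.PosDef)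
    (R : Matrix (Fin p) (Fin n) ℝ)
    (Z : Matrix ((Fin m × Fin n') × Fin n') ((Fin m × Fin n') × Fin n') ℝ)
    (S : Matrix ((Fin r × Fin p') × Fin p') ((Fin r × Fin p') × Fin p') ℝ)
    (hZ : Z.PosDef)
    (hZdiag : ∀ ij : Fin m × Fin n',
      (Matrix.of fun k l => Z (ij, k) (ij, l)).PosDef)
    (hZoff : ∀ ij ij' : Fin m × Fin n', ij ≠ ij' →
      (Matrix.of fun k l => Z (ij, k) (ij', l)).PosSemidef)
    (hS : S.PosDef)
    (hSdiag : ∀ ij : Fin r × Fin p',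
      (Matrix.of fun k l => S (ij, k) (ij, l)).PosDef)
    (hSoff : ∀ ij ij' : Fin r × Fin p', ij ≠ ij' →
      (Matrix.of fun k l => S (ij, k) (ij', l)).PosSemidef) :
    -- the observer gain
    let L : Matrix (Fin n) (Fin p) ℝ := P⁻¹ * Rᵀ
    -- canonical matrices ℋ_ij = e_m(i) e_{n̄}(j)ᵀ and 𝒢_ij = e_r(i) e_{p̄}(j)ᵀ
    let Hcal : Fin m → Fin n' → Matrix (Fin m) (Fin n') ℝ := fun i j =>
      Matrix.single i j (1 : ℝ)
    let Gcal : Fin r → Fin p' → Matrix (Fin r) (Fin p') ℝ := fun i j =>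
      Matrix.single i j (1 : ℝ)
    -- Σ, as a 3×3 block matrix with block sizes n, q, n
    let Sig : Matrix (Fin n ⊕ (Fin q ⊕ Fin n)) (Fin n ⊕ (Fin q ⊕ Fin n)) ℝ :=
      Matrix.fromBlocks (1 - P) (Matrix.fromCols 0 (Aᵀ * P - Cᵀ * R))
        (Matrix.fromRows 0 (P * A - Rᵀ * C))
        (Matrix.fromBlocks (-(μ • (1 : Matrix (Fin q) (Fin q) ℝ)))
          (Eᵀ * P - Dᵀ * R) (P * E - Rᵀ * D) (-P))
    -- 𝕌, stacked over the pairs (i,j), with blocks [0 0 (P G ℋ_ij)ᵀ]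
    let U : Matrix ((Fin m × Fin n') × Fin n') (Fin n ⊕ (Fin q ⊕ Fin n)) ℝ :=
      Matrix.of fun rI c =>
        Sum.elim (fun _ => (0 : ℝ)) (Sum.elim (fun _ => (0 : ℝ))
          (fun l => (P * G * Hcal rI.1.1 rI.1.2)ᵀ rI.2 l)) c
    -- ℍ, block diagonal with diagonal blocks ℍ_i = [H_i 0 0]
    let Hb : Matrix ((Fin m × Fin n') × Fin n')
        ((Fin m × Fin n') × (Fin n ⊕ (Fin q ⊕ Fin n))) ℝ :=
      Matrix.of fun rI cI =>
        if rI.1 = cI.1 then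
          Sum.elim (fun a => H rI.1.1 rI.2 a) (fun _ => (0 : ℝ)) cI.2
        else 0
    -- a stacked parameter matrix with blocks φ_ij • I
    let stackF : (Fin m → Fin n' → ℝ) →
        Matrix ((Fin m × Fin n') × (Fin n ⊕ (Fin q ⊕ Fin n)))
          (Fin n ⊕ (Fin q ⊕ Fin n)) ℝ :=
      fun φ => Matrix.of fun rI c => if rI.2 = c then φ rI.1.1 rI.1.2 else 0
    -- 𝕄, stacked with blocks [0 0 (−Rᵀ F 𝒢_ij)ᵀ]
    let Mb : Matrix ((Fin r × Fin p') × Fin p') (Fin n ⊕ (Fin q ⊕ Fin n)) ℝ :=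
      Matrix.of fun rI c =>
        Sum.elim (fun _ => (0 : ℝ)) (Sum.elim (fun _ => (0 : ℝ))
          (fun l => (-(Rᵀ) * F * Gcal rI.1.1 rI.1.2)ᵀ rI.2 l)) c
    -- 𝔾, block diagonal with diagonal blocks 𝔾_i = [G_i 0 0]
    let Gb : Matrix ((Fin r × Fin p') × Fin p')
        ((Fin r × Fin p') × (Fin n ⊕ (Fin q ⊕ Fin n))) ℝ :=
      Matrix.of fun rI cI =>
        if rI.1 = cI.1 then
          Sum.elim (fun a => Gm rI.1.1 rI.2 a) (fun _ => (0 : ℝ)) cI.2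
        else 0
    -- a stacked parameter matrix with blocks ψ_ij • I
    let stackG : (Fin r → Fin p' → ℝ) →
        Matrix ((Fin r × Fin p') × (Fin n ⊕ (Fin q ⊕ Fin n)))
          (Fin n ⊕ (Fin q ⊕ Fin n)) ℝ :=
      fun ψ => Matrix.of fun rI c => if rI.2 = c then ψ rI.1.1 rI.1.2 else 0
    -- the LMI: for every Φ ∈ 𝓕 and Ψ ∈ 𝓖 the 3×3 block matrix is ≺ 0
    (∀ (φ : Fin m → Fin n' → ℝ) (ψ : Fin r → Fin p' → ℝ),
        (∀ i j, 0 ≤ φ i j ∧ φ i j ≤ fb i j) →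
        (∀ i j, 0 ≤ ψ i j ∧ ψ i j ≤ gb i j) →
        (-(Matrix.fromBlocks Sig
            (Matrix.fromCols (U + Z * Hb * stackF φ)ᵀ
              (Mb + S * Gb * stackG ψ)ᵀ)
            (Matrix.fromRows (U + Z * Hb * stackF φ) (Mb + S * Gb * stackG ψ))
            (Matrix.fromBlocks (-((2 : ℝ) • Z)) 0 0 (-((2 : ℝ) • S))))).PosDef) →
      ∀ (f : Fin m → Fin n' → ℕ → ℝ) (g : Fin r → Fin p' → ℕ → ℝ)
        (ω : ℕ → Fin q → ℝ) (e : ℕ → Fin n → ℝ),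
        (∀ i j k, 0 ≤ f i j k ∧ f i j k ≤ fb i j) →
        (∀ i j k, 0 ≤ g i j k ∧ g i j k ≤ gb i j) →
        (∀ k : ℕ, e (k + 1) =
          (A - L * C + ∑ i : Fin m, ∑ j : Fin n', f i j k • (G * Hcal i j * H i)
              - ∑ i : Fin r, ∑ j : Fin p', g i j k • (L * F * Gcal i j * Gm i)).mulVec
            (e k) + (E - L * D).mulVec (ω k)) →
        ∀ N : ℕ,
          ∑ k ∈ Finset.range N, e k ⬝ᵥ e k ≤
            μ * ∑ k ∈ Finset.range N, ω k ⬝ᵥ ω k +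
              (⨆ i, hP.isHermitian.eigenvalues i) * (e 0 ⬝ᵥ e 0) := by
  intro L Hcal Gcal Sig U Hb stackF Mb Gb stackG hLMI f g ω e hf hg hdyn N
  have hPt : Pᵀ = P := hP.isHermitian
  have hdet : IsUnit P.det := isUnit_iff_ne_zero.mpr hP.det_pos.ne'
  have hPL : P * L = Rᵀ := by
    show P * (P⁻¹ * Rᵀ) = Rᵀ
    rw [← Matrix.mul_assoc, Matrix.mul_nonsing_inv P hdet, Matrix.one_mul]
  set V : ℕ → ℝ := fun k => e k ⬝ᵥ P *ᵥ e k with hV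
  have key : ∀ k, e k ⬝ᵥ e k + V (k+1) ≤ V k + μ * (ω k ⬝ᵥ ω k) := by
    intro k
    simp only [hV]
    have hd := hdyn k
    have hM := hLMI (fun i j => f i j k) (fun i j => g i j k)
      (fun i j => hf i j k) (fun i j => hg i j k)
    set T1 : Matrix (Fin n) (Fin n) ℝ :=
      ∑ i, ∑ j, f i j k • (G * Hcal i j * H i) with hT1
    set T2 : Matrix (Fin n) (Fin n) ℝ :=
      ∑ i, ∑ j, g i j k • (L * F * Gcal i j * Gm i) with hT2
    set x0 : Fin n → ℝ := e k with hx0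
    set w0 : Fin q → ℝ := ω k with hw0
    set x1 : Fin n → ℝ := e (k+1) with hx1
    set uv : (Fin m × Fin n') × Fin n' → ℝ :=
      fun rI => f rI.1.1 rI.1.2 k * ((H rI.1.1) *ᵥ x0) rI.2 with huv
    set wv : (Fin r × Fin p') × Fin p' → ℝ :=
      fun rI => g rI.1.1 rI.1.2 k * ((Gm rI.1.1) *ᵥ x0) rI.2 with hwv
    set B1 := U + Z * Hb * stackF (fun i j => f i j k) with hB1
    set B2 := Mb + S * Gb * stackG (fun i j => g i j k) with hB2
    set xv : Fin n ⊕ (Fin q ⊕ Fin n) → ℝ := Sum.elim x0 (Sum.elim w0 x1) with hxv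
    set vv := Sum.elim xv (Sum.elim uv wv) with hvv
    have hquad : vv ⬝ᵥ ((Matrix.fromBlocks Sig (Matrix.fromCols B1ᵀ B2ᵀ)
        (Matrix.fromRows B1 B2)
        (Matrix.fromBlocks (-((2:ℝ) • Z)) 0 0 (-((2:ℝ) • S)))) *ᵥ vv) ≤ 0 := by
      have h := hM.posSemidef.dotProduct_mulVec_nonneg vv
      rw [Matrix.neg_mulVec] at h
      simp only [dotProduct_neg, star_trivial] at h
      linarith
    have hexp : vv ⬝ᵥ ((Matrix.fromBlocks Sig (Matrix.fromCols B1ᵀ B2ᵀ)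
        (Matrix.fromRows B1 B2)
        (Matrix.fromBlocks (-((2:ℝ) • Z)) 0 0 (-((2:ℝ) • S)))) *ᵥ vv)
        = xv ⬝ᵥ (Sig *ᵥ xv) + xv ⬝ᵥ (B1ᵀ *ᵥ uv) + xv ⬝ᵥ (B2ᵀ *ᵥ wv)
          + uv ⬝ᵥ (B1 *ᵥ xv) + wv ⬝ᵥ (B2 *ᵥ xv)
          - 2 * (uv ⬝ᵥ (Z *ᵥ uv)) - 2 * (wv ⬝ᵥ (S *ᵥ wv)) := by
      rw [hvv, Matrix.fromBlocks_mulVec]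
      simp only [Sum.elim_comp_inl, Sum.elim_comp_inr, sumElim_dotProduct_sumElim,
        dotProduct_add, Matrix.fromCols_mulVec_sumElim, Matrix.fromRows_mulVec,
        Matrix.fromBlocks_mulVec, Matrix.zero_mulVec, add_zero, zero_add,
        Matrix.neg_mulVec, dotProduct_neg, Matrix.smul_mulVec,
        dotProduct_smul, smul_eq_mul]
      ring
    have hI1 : (Hb * stackF (fun i j => f i j k)) *ᵥ xv = uv := by
      rw [← Matrix.mulVec_mulVec]
      have hy : stackF (fun i j => f i j k) *ᵥ xv
          = fun cI => f cI.1.1 cI.1.2 k * xv cI.2 := by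
        funext cI
        simp [stackF, Matrix.mulVec, dotProduct, ite_mul]
      rw [hy]
      funext rI
      obtain ⟨⟨i0, j0⟩, a0⟩ := rI
      simp only [huv, Hb, Matrix.mulVec, dotProduct, Matrix.of_apply,
        Fintype.sum_prod_type, ite_mul, zero_mul, Finset.mem_univ,
        if_true, Fintype.sum_sum_type, Sum.elim_inl, Sum.elim_inr, hxv,
        mul_zero, Finset.sum_const_zero, add_zero, Prod.mk.injEq, ite_and,
        Finset.sum_ite_irrel, Finset.sum_ite_eq, Finset.sum_ite_eq', ite_self]
      rw [Finset.mul_sum]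
      exact Finset.sum_congr rfl fun a _ => by ring
    have hI2 : (Gb * stackG (fun i j => g i j k)) *ᵥ xv = wv := by
      rw [← Matrix.mulVec_mulVec]
      have hy : stackG (fun i j => g i j k) *ᵥ xv
          = fun cI => g cI.1.1 cI.1.2 k * xv cI.2 := by
        funext cI
        simp [stackG, Matrix.mulVec, dotProduct, ite_mul]
      rw [hy]
      funext rI
      obtain ⟨⟨i0, j0⟩, a0⟩ := rI
      simp only [hwv, Gb, Matrix.mulVec, dotProduct, Matrix.of_apply,
        Fintype.sum_prod_type, ite_mul, zero_mul, Finset.mem_univ,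
        if_true, Fintype.sum_sum_type, Sum.elim_inl, Sum.elim_inr, hxv,
        mul_zero, Finset.sum_const_zero, add_zero, Prod.mk.injEq, ite_and,
        Finset.sum_ite_irrel, Finset.sum_ite_eq, Finset.sum_ite_eq', ite_self]
      rw [Finset.mul_sum]
      exact Finset.sum_congr rfl fun a _ => by ring
    have hf1 : uv ⬝ᵥ (B1 *ᵥ xv) = uv ⬝ᵥ (U *ᵥ xv) + uv ⬝ᵥ (Z *ᵥ uv) := by
      rw [hB1, Matrix.add_mulVec, dotProduct_add, Matrix.mul_assoc,
        ← Matrix.mulVec_mulVec, hI1]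
    have hf2 : wv ⬝ᵥ (B2 *ᵥ xv) = wv ⬝ᵥ (Mb *ᵥ xv) + wv ⬝ᵥ (S *ᵥ wv) := by
      rw [hB2, Matrix.add_mulVec, dotProduct_add, Matrix.mul_assoc,
        ← Matrix.mulVec_mulVec, hI2]
    have he1 : xv ⬝ᵥ (B1ᵀ *ᵥ uv) = uv ⬝ᵥ (B1 *ᵥ xv) := (dot_symm B1 uv xv).symm
    have he2 : xv ⬝ᵥ (B2ᵀ *ᵥ wv) = wv ⬝ᵥ (B2 *ᵥ xv) := (dot_symm B2 wv xv).symm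
    have hUx : U *ᵥ xv = fun rI => ((P * G * Hcal rI.1.1 rI.1.2)ᵀ *ᵥ x1) rI.2 := by
      funext rI
      simp [U, Matrix.mulVec, dotProduct, Fintype.sum_sum_type, hxv]
    have hMx : Mb *ᵥ xv = fun rI => ((-(Rᵀ) * F * Gcal rI.1.1 rI.1.2)ᵀ *ᵥ x1) rI.2 := by
      funext rI
      simp [Mb, Matrix.mulVec, dotProduct, Fintype.sum_sum_type, hxv]
    have hPT1 : P * T1 = ∑ i, ∑ j, f i j k • (P * G * Hcal i j * H i) := by
      rw [hT1, Finset.mul_sum]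
      refine Finset.sum_congr rfl fun i _ => ?_
      rw [Finset.mul_sum]
      refine Finset.sum_congr rfl fun j _ => ?_
      rw [Matrix.mul_smul, ← Matrix.mul_assoc, ← Matrix.mul_assoc]
    have hPT2 : P * T2 = ∑ i, ∑ j, g i j k • (Rᵀ * F * Gcal i j * Gm i) := by
      rw [hT2, Finset.mul_sum]
      refine Finset.sum_congr rfl fun i _ => ?_
      rw [Finset.mul_sum]
      refine Finset.sum_congr rfl fun j _ => ?_
      rw [Matrix.mul_smul, ← Matrix.mul_assoc, ← Matrix.mul_assoc, ← Matrix.mul_assoc, hPL]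
    have hI3 : uv ⬝ᵥ (U *ᵥ xv) = x1 ⬝ᵥ ((P * T1) *ᵥ x0) := by
      rw [hUx, hPT1]
      simp only [sum_mulVec', dot_sum', Matrix.smul_mulVec, dotProduct_smul,
        smul_eq_mul]
      simp only [dotProduct, Fintype.sum_prod_type, huv]
      refine Finset.sum_congr rfl fun i _ => Finset.sum_congr rfl fun j _ => ?_
      have hsw : ∑ l, x1 l * ((P * G * Hcal i j * H i) *ᵥ x0) l
          = ∑ a, ((H i) *ᵥ x0) a * ((P * G * Hcal i j)ᵀ *ᵥ x1) a := by
        have h' := dot_symm (P * G * Hcal i j) x1 ((H i) *ᵥ x0)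
        rw [Matrix.mulVec_mulVec] at h'
        simpa [dotProduct] using h'
      rw [hsw, Finset.mul_sum]
      exact Finset.sum_congr rfl fun a _ => by ring
    have hI4 : wv ⬝ᵥ (Mb *ᵥ xv) = -(x1 ⬝ᵥ ((P * T2) *ᵥ x0)) := by
      rw [hMx, hPT2]
      simp only [sum_mulVec', dot_sum', Matrix.smul_mulVec, dotProduct_smul,
        smul_eq_mul, neg_add_rev]
      simp only [dot_sum', dotProduct_smul, smul_eq_mul, ← Finset.sum_neg_distrib]
      simp only [dotProduct, Fintype.sum_prod_type, hwv]
      refine Finset.sum_congr rfl fun i _ => Finset.sum_congr rfl fun j _ => ?_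
      have hneg : -(Rᵀ) * F * Gcal i j = -(Rᵀ * F * Gcal i j) := by
        rw [Matrix.neg_mul, Matrix.neg_mul]
      have hsw : ∑ l, x1 l * ((Rᵀ * F * Gcal i j * Gm i) *ᵥ x0) l
          = ∑ a, ((Gm i) *ᵥ x0) a * ((Rᵀ * F * Gcal i j)ᵀ *ᵥ x1) a := by
        have h' := dot_symm (Rᵀ * F * Gcal i j) x1 ((Gm i) *ᵥ x0)
        rw [Matrix.mulVec_mulVec] at h'
        simpa [dotProduct] using h'
      rw [show -(g i j k * ∑ l, x1 l * ((Rᵀ * F * Gcal i j * Gm i) *ᵥ x0) l)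
          = ∑ a, -(g i j k * (((Gm i) *ᵥ x0) a * ((Rᵀ * F * Gcal i j)ᵀ *ᵥ x1) a)) from by
        rw [hsw, Finset.mul_sum, ← Finset.sum_neg_distrib]]
      refine Finset.sum_congr rfl fun a _ => ?_
      rw [hneg, Matrix.transpose_neg, Matrix.neg_mulVec, Pi.neg_apply]
      ring
    have hSig : xv ⬝ᵥ (Sig *ᵥ xv) = x0 ⬝ᵥ x0 - x0 ⬝ᵥ (P *ᵥ x0) - μ * (w0 ⬝ᵥ w0)
        - x1 ⬝ᵥ (P *ᵥ x1)
        + x1 ⬝ᵥ ((P*A - Rᵀ*C) *ᵥ x0) + x1 ⬝ᵥ ((P*A - Rᵀ*C) *ᵥ x0)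
        + x1 ⬝ᵥ ((P*E - Rᵀ*D) *ᵥ w0) + x1 ⬝ᵥ ((P*E - Rᵀ*D) *ᵥ w0) := by
      have hs1 : x0 ⬝ᵥ ((Aᵀ*P - Cᵀ*R) *ᵥ x1) = x1 ⬝ᵥ ((P*A - Rᵀ*C) *ᵥ x0) := by
        rw [dot_symm]
        congr 2
        rw [Matrix.transpose_sub, Matrix.transpose_mul, Matrix.transpose_mul,
          Matrix.transpose_transpose, Matrix.transpose_transpose, hPt]
      have hs2 : w0 ⬝ᵥ ((Eᵀ*P - Dᵀ*R) *ᵥ x1) = x1 ⬝ᵥ ((P*E - Rᵀ*D) *ᵥ w0) := by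
        rw [dot_symm]
        congr 2
        rw [Matrix.transpose_sub, Matrix.transpose_mul, Matrix.transpose_mul,
          Matrix.transpose_transpose, Matrix.transpose_transpose, hPt]
      have hs0 : x0 ⬝ᵥ ((1 - P) *ᵥ x0) = x0 ⬝ᵥ x0 - x0 ⬝ᵥ (P *ᵥ x0) := by
        rw [Matrix.sub_mulVec, dotProduct_sub, Matrix.one_mulVec]
      rw [hxv, Matrix.fromBlocks_mulVec]
      simp only [Sum.elim_comp_inl, Sum.elim_comp_inr, sumElim_dotProduct_sumElim,
        dotProduct_add, Matrix.fromCols_mulVec_sumElim, Matrix.fromRows_mulVec,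
        Matrix.fromBlocks_mulVec, Matrix.zero_mulVec, add_zero, zero_add,
        Matrix.one_mulVec, Matrix.neg_mulVec, dotProduct_neg,
        Matrix.smul_mulVec, dotProduct_smul, smul_eq_mul,
        dotProduct_zero]
      rw [hs0, hs1, hs2]
      ring
    have hfin : x1 ⬝ᵥ (P *ᵥ x1) = x1 ⬝ᵥ ((P*A - Rᵀ*C) *ᵥ x0) + x1 ⬝ᵥ ((P * T1) *ᵥ x0)
        - x1 ⬝ᵥ ((P * T2) *ᵥ x0) + x1 ⬝ᵥ ((P*E - Rᵀ*D) *ᵥ w0) := by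
      have hPv : P *ᵥ x1 = (P*A - Rᵀ*C) *ᵥ x0 + (P * T1) *ᵥ x0 - (P * T2) *ᵥ x0
          + (P*E - Rᵀ*D) *ᵥ w0 := by
        have hm1 : P * (A - L * C + T1 - T2) = P*A - Rᵀ*C + P * T1 - P * T2 := by
          rw [Matrix.mul_sub, Matrix.mul_add, Matrix.mul_sub, ← Matrix.mul_assoc, hPL]
        have hm2 : P * (E - L * D) = P*E - Rᵀ*D := by
          rw [Matrix.mul_sub, ← Matrix.mul_assoc, hPL]
        rw [hd]
        rw [Matrix.mulVec_add]
        rw [Matrix.mulVec_mulVec]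
        rw [Matrix.mulVec_mulVec]
        rw [hm1]
        rw [hm2]
        rw [Matrix.sub_mulVec, Matrix.add_mulVec, Matrix.sub_mulVec]
        try abel
      rw [hPv]
      simp only [dotProduct_add, dotProduct_sub]
      try ring
    rw [hexp] at hquad
    rw [he1, he2, hf1, hf2, hI3, hI4, hSig] at hquad
    linarith
  have hsum : ∀ N', (∑ k ∈ Finset.range N', e k ⬝ᵥ e k) + V N' ≤
      μ * (∑ k ∈ Finset.range N', ω k ⬝ᵥ ω k) + V 0 := by
    intro N'
    induction N' with
    | zero => simp
    | succ M ih =>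
      rw [Finset.sum_range_succ, Finset.sum_range_succ]
      have := key M
      nlinarith [this, ih]
  have hVN : 0 ≤ V N := by
    have := hP.posSemidef.dotProduct_mulVec_nonneg (e N)
    simpa [hV] using this
  have hV0 : V 0 ≤ (⨆ i, hP.isHermitian.eigenvalues i) * (e 0 ⬝ᵥ e 0) :=
    quad_le_sup_eig P hP (e 0)
  have := hsum N
  linarith
end
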